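/- With d_{n,j} = Σ_{k=1}^n a_{T_k − j} (where a_u = 0 for u < 0) and d_n² = Σ_{j∈ℤ} d_{n,j}², one has sup_{j∈ℤ} ( d_{n,j}² / d_n² ) → 0 in probability as n → ∞. -/

import Mathlib

open MeasureTheory ProbabilityTheory Filter Set Topology Asymptotics
open scoped ENNReal ProbabilityTheory

set_option linter.unusedSectionVars false
set_option maxHeartbeats 1000000

namespace Stmt12Work

open Filter Finset


variable {a : ℕ → ℝ} {aZ : ℤ → ℝ} {d Cd B : ℝ} {i₀ : ℕ}

def DD (aZ : ℤ → ℝ) (t : ℕ → ℕ) (n : ℕ) (j : ℤ) : ℝ :=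
  ∑ k ∈ Finset.Icc 1 n, aZ ((t k : ℤ) - j)

def PP (aZ : ℤ → ℝ) (t : ℕ → ℕ) (i₀ n : ℕ) (j : ℤ) : ℝ :=
  ∑ k ∈ (Finset.Icc 1 n).filter (fun l => (i₀ : ℤ) ≤ (t l : ℤ) - j), aZ ((t k : ℤ) - j)


lemma aux_sum_rpow_upper {d : ℝ} (hd0 : 0 < d) (hd1 : d < 1) :
    ∀ m : ℕ, ∑ i ∈ Finset.Icc 1 m, (i : ℝ) ^ (d - 1) ≤ (m : ℝ) ^ d / d := by
  intro m
  induction m with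
  | zero => simp [Real.zero_rpow (ne_of_gt hd0)]
  | succ m ih =>
    rw [Finset.sum_Icc_succ_top (by omega : 1 ≤ m + 1)]
    set x : ℝ := (m : ℝ) with hx
    have hx0 : (0:ℝ) ≤ x := by positivity
    set y : ℝ := x + 1 with hy
    have hy0 : (0:ℝ) < y := by positivity
    have hcast : ((m + 1 : ℕ) : ℝ) = y := by push_cast; rfl
    rw [hcast]
    set u : ℝ := y ^ (d - 1) with hu
    have hu0 : 0 ≤ u := Real.rpow_nonneg hy0.le _
    have hyd : y ^ d = u * y := by
      rw [hu, ← Real.rpow_add_one (ne_of_gt hy0)]; norm_num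
    have hgm := Real.geom_mean_le_arith_mean2_weighted
      (w₁ := d) (w₂ := 1 - d) (p₁ := x / y) (p₂ := 1)
      hd0.le (by linarith) (div_nonneg hx0 hy0.le) zero_le_one (by ring)
    rw [Real.one_rpow, mul_one, mul_one] at hgm
    have hdiv : (x / y) ^ d = x ^ d / y ^ d := Real.div_rpow hx0 hy0.le _
    rw [hdiv] at hgm
    have hyd0 : 0 < y ^ d := Real.rpow_pos_of_pos hy0 _
    have hkey : x ^ d ≤ (d * (x / y) + (1 - d)) * (u * y) := by
      rw [← hyd]
      calc x ^ d = x ^ d / y ^ d * y ^ d := by field_simp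
        _ ≤ (d * (x / y) + (1 - d)) * y ^ d :=
            mul_le_mul_of_nonneg_right hgm hyd0.le
    have hexp : (d * (x / y) + (1 - d)) * (u * y) = d * x * u + (1 - d) * (u * y) := by
      field_simp
    rw [hexp] at hkey
    have hid : u * y = d * x * u + (1 - d) * (u * y) + d * u := by
      rw [hy]; ring
    have h2 : x ^ d + d * u ≤ u * y := by linarith
    calc (∑ i ∈ Finset.Icc 1 m, (i : ℝ) ^ (d - 1)) + u ≤ x ^ d / d + u := by linarith
      _ = (x ^ d + d * u) / d := by
          rw [add_div, mul_div_cancel_left₀ _ (ne_of_gt hd0)]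
      _ ≤ (u * y) / d := div_le_div_of_nonneg_right h2 hd0.le
      _ = y ^ d / d := by rw [hyd]


section Main

variable (haZ : ∀ u : ℤ, aZ u = if 0 ≤ u then a u.toNat else 0)
  (hd0 : 0 < d) (hd1 : d < 1/2) (hCd : 0 < Cd) (hi₀ : 1 ≤ i₀)
  (hlo : ∀ i : ℕ, i₀ ≤ i → Cd / 2 * (i : ℝ) ^ (d - 1) ≤ a i)
  (hhi : ∀ i : ℕ, i₀ ≤ i → a i ≤ 2 * Cd * (i : ℝ) ^ (d - 1))
  (hBa : ∀ i : ℕ, |a i| ≤ B)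
  (ha2 : Summable fun i => (a i) ^ 2)

include haZ in
lemma aZ_of_neg {u : ℤ} (hu : u < 0) : aZ u = 0 := by
  rw [haZ]; simp [not_le.2 hu]

include haZ in
lemma aZ_of_nonneg {u : ℤ} (hu : 0 ≤ u) : aZ u = a u.toNat := by
  rw [haZ]; simp [hu]

include haZ hlo in
lemma aZ_lo {u : ℤ} (hu : (i₀ : ℤ) ≤ u) : Cd / 2 * (u : ℝ) ^ (d - 1) ≤ aZ u := by
  have hu0 : (0:ℤ) ≤ u := le_trans (by exact_mod_cast Nat.zero_le i₀) hu
  rw [aZ_of_nonneg haZ hu0]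
  have h1 : ((u.toNat : ℝ)) = (u : ℝ) := by exact_mod_cast Int.toNat_of_nonneg hu0
  have := hlo u.toNat (by omega)
  rwa [h1] at this

include haZ hhi in
lemma aZ_hi {u : ℤ} (hu : (i₀ : ℤ) ≤ u) : aZ u ≤ 2 * Cd * (u : ℝ) ^ (d - 1) := by
  have hu0 : (0:ℤ) ≤ u := le_trans (by exact_mod_cast Nat.zero_le i₀) hu
  rw [aZ_of_nonneg haZ hu0]
  have h1 : ((u.toNat : ℝ)) = (u : ℝ) := by exact_mod_cast Int.toNat_of_nonneg hu0
  have := hhi u.toNat (by omega)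
  rwa [h1] at this

include haZ hlo hCd hd0 hi₀ in
lemma aZ_nonneg {u : ℤ} (hu : (i₀ : ℤ) ≤ u) : 0 ≤ aZ u := by
  refine le_trans ?_ (aZ_lo haZ hlo hu)
  have hu0 : (0:ℝ) < (u : ℝ) := by
    have h1 : (1:ℤ) ≤ u := le_trans (by exact_mod_cast hi₀) hu
    exact_mod_cast lt_of_lt_of_le zero_lt_one (by exact_mod_cast h1)
  positivity

include haZ hBa in
lemma aZ_abs (u : ℤ) : |aZ u| ≤ B := by
  rw [haZ]
  by_cases hu : (0:ℤ) ≤ u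
  · simpa [hu] using hBa u.toNat
  · simp only [hu, if_false, abs_zero]
    exact le_trans (abs_nonneg (a 0)) (hBa 0)

include hBa in
lemma B_nonneg : 0 ≤ B := le_trans (abs_nonneg _) (hBa 0)

include haZ ha2 in
lemma summable_aZ_sq : Summable (fun u : ℤ => (aZ u) ^ 2) := by
  apply Summable.of_nat_of_neg_add_one
  · refine ha2.congr fun i => ?_
    rw [haZ]; simp
  · refine summable_zero.congr fun i => ?_
    rw [haZ]
    have : ¬ ((i:ℤ) ≤ -1) := by omega
    simp [this]

include haZ ha2 in
lemma summable_shift (c : ℤ) : Summable (fun j : ℤ => (aZ (c - j)) ^ 2) := by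
  have h := (Equiv.subLeft c).summable_iff (f := fun u : ℤ => (aZ u) ^ 2)
  exact h.2 (summable_aZ_sq haZ ha2)

include haZ ha2 in
lemma summable_DD_sq (t : ℕ → ℕ) (n : ℕ) :
    Summable (fun j : ℤ => (DD aZ t n j) ^ 2) := by
  have hbig : Summable (fun j : ℤ =>
      (n : ℝ) * ∑ k ∈ Finset.Icc 1 n, (aZ ((t k : ℤ) - j)) ^ 2) := by
    refine Summable.mul_left _ ?_
    exact summable_sum (fun k _ => summable_shift haZ ha2 ((t k : ℤ)))
  refine Summable.of_nonneg_of_le (fun j => sq_nonneg _) (fun j => ?_) hbig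
  have h := sq_sum_le_card_mul_sum_sq (s := Finset.Icc 1 n)
    (f := fun k => aZ ((t k : ℤ) - j))
  simpa [DD, Nat.card_Icc] using h

include haZ hd0 hCd hi₀ hlo in
lemma PP_nonneg (t : ℕ → ℕ) (n : ℕ) (j : ℤ) : 0 ≤ PP aZ t i₀ n j := by
  refine Finset.sum_nonneg fun k hk => ?_
  rw [Finset.mem_filter] at hk
  exact aZ_nonneg haZ hd0 hCd hi₀ hlo hk.2

include haZ hBa in
lemma head_abs_le {t : ℕ → ℕ} (ht : StrictMono t) (n : ℕ) (j : ℤ) :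
    |DD aZ t n j - PP aZ t i₀ n j| ≤ B * i₀ := by
  classical
  have hB0 : 0 ≤ B := B_nonneg hBa
  have hsplit := Finset.sum_filter_add_sum_filter_not (Finset.Icc 1 n)
    (fun l => (i₀ : ℤ) ≤ (t l : ℤ) - j) (fun k => aZ ((t k : ℤ) - j))
  set s1 := (Finset.Icc 1 n).filter (fun l => ¬ (i₀ : ℤ) ≤ (t l : ℤ) - j) with hs1
  have hDP : DD aZ t n j - PP aZ t i₀ n j = ∑ k ∈ s1, aZ ((t k : ℤ) - j) := by
    rw [DD, PP]; rw [hs1]; linarith [hsplit]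
  rw [hDP]
  have habs : ∀ u : ℤ, |aZ u| ≤ B := aZ_abs haZ hBa
  set s2 := s1.filter (fun l => 0 ≤ (t l : ℤ) - j) with hs2
  have heq : ∑ k ∈ s2, |aZ ((t k : ℤ) - j)| = ∑ k ∈ s1, |aZ ((t k : ℤ) - j)| := by
    refine Finset.sum_filter_of_ne fun x hx hne => ?_
    by_contra hneg
    rw [aZ_of_neg haZ (by omega)] at hne
    simp at hne
  have hcard : (s2.card : ℝ) ≤ (i₀ : ℝ) := by
    have h1 : s2.card ≤ (Finset.Ico j (j + i₀)).card := by
      refine Finset.card_le_card_of_injOn (fun k => ((t k : ℤ))) ?_ ?_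
      · intro k hk
        simp only [Finset.mem_coe, hs2, hs1, Finset.mem_filter] at hk
        simp only [Finset.mem_coe, Finset.mem_Ico]
        omega
      · intro x _ y _ hxy
        simp only at hxy
        exact ht.injective (by exact_mod_cast hxy)
    have h2 : (Finset.Ico j (j + i₀)).card = i₀ := by
      rw [Int.card_Ico]; omega
    exact_mod_cast h1.trans_eq h2
  calc |∑ k ∈ s1, aZ ((t k : ℤ) - j)| ≤ ∑ k ∈ s1, |aZ ((t k : ℤ) - j)| :=
        Finset.abs_sum_le_sum_abs _ _
    _ = ∑ k ∈ s2, |aZ ((t k : ℤ) - j)| := heq.symm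
    _ ≤ ∑ _k ∈ s2, B := Finset.sum_le_sum fun k _ => habs _
    _ = B * s2.card := by rw [Finset.sum_const, nsmul_eq_mul, mul_comm]
    _ ≤ B * i₀ := mul_le_mul_of_nonneg_left hcard hB0


include haZ hd0 hd1 hCd hi₀ hlo hhi in
lemma PP_shift {t : ℕ → ℕ} (ht : StrictMono t) (n : ℕ) (j : ℤ) (m : ℕ) :
    (2:ℝ)^(d-3) * PP aZ t i₀ n j - (2:ℝ)^(d-3) * (2*Cd/d) * (m:ℝ)^d
      ≤ PP aZ t i₀ n (j - m) := by
  classical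
  set A := (Finset.Icc 1 n).filter (fun l => (i₀ : ℤ) ≤ (t l : ℤ) - j) with hA
  have hstep1 : ∑ k ∈ A, aZ ((t k : ℤ) - (j - m)) ≤ PP aZ t i₀ n (j - m) := by
    rw [PP]
    refine Finset.sum_le_sum_of_subset_of_nonneg ?_ ?_
    · intro k hk
      simp only [hA, Finset.mem_filter] at hk ⊢
      exact ⟨hk.1, by omega⟩
    · intro k hk _
      simp only [Finset.mem_filter] at hk
      exact aZ_nonneg haZ hd0 hCd hi₀ hlo hk.2
  set Abig := A.filter (fun l => (m:ℤ) ≤ (t l : ℤ) - j) with hAbig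
  set Asml := A.filter (fun l => ¬ (m:ℤ) ≤ (t l : ℤ) - j) with hAsml
  have hmemA : ∀ k ∈ A, (i₀ : ℤ) ≤ (t k : ℤ) - j := by
    intro k hk; simp only [hA, Finset.mem_filter] at hk; exact hk.2
  have hstep2 : ∑ k ∈ Abig, aZ ((t k : ℤ) - (j - m)) ≤ ∑ k ∈ A, aZ ((t k : ℤ) - (j - m)) := by
    refine Finset.sum_le_sum_of_subset_of_nonneg (Finset.filter_subset _ _) ?_
    intro k hk _
    exact aZ_nonneg haZ hd0 hCd hi₀ hlo (by have := hmemA k hk; omega)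
  have hstep3 : ∀ k ∈ Abig, (2:ℝ)^(d-3) * aZ ((t k : ℤ) - j) ≤ aZ ((t k : ℤ) - (j - m)) := by
    intro k hk
    simp only [hAbig, Finset.mem_filter] at hk
    set u : ℤ := (t k : ℤ) - j with hud
    have hui : (i₀ : ℤ) ≤ u := hmemA k hk.1
    have hum : (m : ℤ) ≤ u := hk.2
    have hu1 : (1:ℝ) ≤ (u:ℝ) := by exact_mod_cast le_trans (by exact_mod_cast hi₀) hui
    have hu0 : (0:ℝ) < (u:ℝ) := lt_of_lt_of_le zero_lt_one hu1
    have h1 : Cd / 2 * ((u + m : ℤ) : ℝ) ^ (d-1) ≤ aZ ((t k : ℤ) - (j - m)) := by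
      have : (t k : ℤ) - (j - m) = u + m := by omega
      rw [this]
      exact aZ_lo haZ hlo (by omega)
    have hcast : ((u + m : ℤ) : ℝ) = (u:ℝ) + (m:ℝ) := by push_cast; ring
    rw [hcast] at h1
    have h2 : ((2:ℝ) * u) ^ (d-1) ≤ ((u:ℝ) + m) ^ (d-1) := by
      refine Real.rpow_le_rpow_of_nonpos (by positivity) ?_ (by linarith)
      have h2c : ((m:ℕ):ℝ) ≤ (u:ℝ) := by exact_mod_cast hum
      linarith
    have h3 : ((2:ℝ) * u) ^ (d-1) = (2:ℝ)^(d-1) * (u:ℝ)^(d-1) :=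
      Real.mul_rpow (by norm_num) hu0.le
    have h4 : aZ u / (2 * Cd) ≤ (u:ℝ)^(d-1) := by
      rw [div_le_iff₀ (by positivity)]
      have := aZ_hi haZ hhi hui
      calc aZ u ≤ 2 * Cd * (u:ℝ)^(d-1) := this
        _ = (u:ℝ)^(d-1) * (2 * Cd) := by ring
    have hpos : (0:ℝ) < Cd / 2 * ((2:ℝ)^(d-1)) := by positivity
    have h5 : Cd / 2 * ((2:ℝ)^(d-1) * (aZ u / (2 * Cd))) ≤ aZ ((t k : ℤ) - (j - m)) := by
      calc Cd / 2 * ((2:ℝ)^(d-1) * (aZ u / (2 * Cd)))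
          = Cd / 2 * ((2:ℝ)^(d-1)) * (aZ u / (2 * Cd)) := by ring
        _ ≤ Cd / 2 * ((2:ℝ)^(d-1)) * ((u:ℝ)^(d-1)) :=
            mul_le_mul_of_nonneg_left h4 hpos.le
        _ = Cd / 2 * ((2:ℝ)^(d-1) * (u:ℝ)^(d-1)) := by ring
        _ = Cd / 2 * (((2:ℝ) * u) ^ (d-1)) := by rw [h3]
        _ ≤ Cd / 2 * (((u:ℝ) + m) ^ (d-1)) := by
            refine mul_le_mul_of_nonneg_left h2 (by positivity)
        _ ≤ aZ ((t k : ℤ) - (j - m)) := h1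
    have hconst : Cd / 2 * ((2:ℝ)^(d-1) * (aZ u / (2 * Cd))) = (2:ℝ)^(d-3) * aZ u := by
      have h24 : (2:ℝ)^(2:ℝ) = 4 := by
        norm_num
      have h23 : (2:ℝ)^(d-3) = (2:ℝ)^(d-1) / 4 := by
        rw [show d - 3 = (d-1) - 2 by ring, Real.rpow_sub (by norm_num : (0:ℝ) < 2), h24]
      rw [h23]
      field_simp
      ring
    rw [← hconst]
    exact h5
  have hstep4 : (2:ℝ)^(d-3) * ∑ k ∈ Abig, aZ ((t k : ℤ) - j)
      ≤ ∑ k ∈ Abig, aZ ((t k : ℤ) - (j - m)) := by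
    rw [Finset.mul_sum]
    exact Finset.sum_le_sum hstep3
  have hsplitA : ∑ k ∈ Abig, aZ ((t k : ℤ) - j) + ∑ k ∈ Asml, aZ ((t k : ℤ) - j)
      = PP aZ t i₀ n j := by
    rw [PP]
    exact Finset.sum_filter_add_sum_filter_not A _ _
  have hsml : ∑ k ∈ Asml, aZ ((t k : ℤ) - j) ≤ (2 * Cd / d) * (m:ℝ)^d := by
    have hinj : ∀ x ∈ Asml, ∀ y ∈ Asml,
        ((t x : ℤ) - j).toNat = ((t y : ℤ) - j).toNat → x = y := by
      intro x hx y hy hxy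
      simp only [hAsml, Finset.mem_filter] at hx hy
      have hx2 := hmemA x hx.1
      have hy2 := hmemA y hy.1
      have : (t x : ℤ) = (t y : ℤ) := by omega
      exact ht.injective (by exact_mod_cast this)
    have himg : ∑ k ∈ Asml, aZ ((t k : ℤ) - j)
        = ∑ i ∈ Asml.image (fun k => ((t k : ℤ) - j).toNat), a i := by
      rw [Finset.sum_image hinj]
      refine Finset.sum_congr rfl fun k hk => ?_
      have := hmemA k (Finset.mem_of_mem_filter k hk)
      rw [aZ_of_nonneg haZ (by omega)]
    have hsub2 : Asml.image (fun k => ((t k : ℤ) - j).toNat) ⊆ Finset.Ico i₀ m := by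
      intro i hi
      rw [Finset.mem_image] at hi
      obtain ⟨k, hk, hki⟩ := hi
      simp only [hAsml, Finset.mem_filter] at hk
      have h1 := hmemA k hk.1
      have h2 := hk.2
      rw [Finset.mem_Ico, ← hki]
      omega
    have hnonneg : ∀ i ∈ Finset.Ico i₀ m, 0 ≤ a i := by
      intro i hi
      rw [Finset.mem_Ico] at hi
      refine le_trans ?_ (hlo i hi.1)
      have : (0:ℝ) < (i:ℝ) := by
        have : 1 ≤ i := le_trans hi₀ hi.1
        exact_mod_cast Nat.lt_of_lt_of_le Nat.zero_lt_one this
      positivity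
    have h6 : ∑ i ∈ Asml.image (fun k => ((t k : ℤ) - j).toNat), a i
        ≤ ∑ i ∈ Finset.Ico i₀ m, a i :=
      Finset.sum_le_sum_of_subset_of_nonneg hsub2 (fun i hi _ => hnonneg i hi)
    have h7 : ∑ i ∈ Finset.Ico i₀ m, a i ≤ 2 * Cd * ∑ i ∈ Finset.Ico i₀ m, (i:ℝ)^(d-1) := by
      rw [Finset.mul_sum]
      refine Finset.sum_le_sum fun i hi => ?_
      rw [Finset.mem_Ico] at hi
      exact hhi i hi.1
    have h8 : ∑ i ∈ Finset.Ico i₀ m, (i:ℝ)^(d-1) ≤ ∑ i ∈ Finset.Icc 1 (m-1), (i:ℝ)^(d-1) := by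
      refine Finset.sum_le_sum_of_subset_of_nonneg ?_ ?_
      · intro i hi
        rw [Finset.mem_Ico] at hi
        rw [Finset.mem_Icc]
        omega
      · intro i hi hi2
        positivity
    have h9 : ∑ i ∈ Finset.Icc 1 (m-1), (i:ℝ)^(d-1) ≤ ((m-1:ℕ):ℝ)^d / d :=
      aux_sum_rpow_upper hd0 (by linarith) (m-1)
    have h10 : ((m-1:ℕ):ℝ)^d ≤ (m:ℝ)^d := by
      refine Real.rpow_le_rpow (by positivity) ?_ hd0.le
      exact_mod_cast Nat.sub_le m 1
    calc ∑ k ∈ Asml, aZ ((t k : ℤ) - j)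
        = ∑ i ∈ Asml.image (fun k => ((t k : ℤ) - j).toNat), a i := himg
      _ ≤ ∑ i ∈ Finset.Ico i₀ m, a i := h6
      _ ≤ 2 * Cd * ∑ i ∈ Finset.Ico i₀ m, (i:ℝ)^(d-1) := h7
      _ ≤ 2 * Cd * (((m-1:ℕ):ℝ)^d / d) := by
          refine mul_le_mul_of_nonneg_left (le_trans h8 h9) (by positivity)
      _ ≤ 2 * Cd * ((m:ℝ)^d / d) := by
          refine mul_le_mul_of_nonneg_left ?_ (by positivity)
          exact div_le_div_of_nonneg_right h10 hd0.le
      _ = (2 * Cd / d) * (m:ℝ)^d := by ring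
  have hpow0 : (0:ℝ) < (2:ℝ)^(d-3) := Real.rpow_pos_of_pos (by norm_num) _
  have hfinal : (2:ℝ)^(d-3) * (PP aZ t i₀ n j - (2 * Cd / d) * (m:ℝ)^d)
      ≤ PP aZ t i₀ n (j - m) := by
    have e1 : PP aZ t i₀ n j - (2 * Cd / d) * (m:ℝ)^d
        ≤ ∑ k ∈ Abig, aZ ((t k : ℤ) - j) := by linarith
    calc (2:ℝ)^(d-3) * (PP aZ t i₀ n j - (2 * Cd / d) * (m:ℝ)^d)
        ≤ (2:ℝ)^(d-3) * ∑ k ∈ Abig, aZ ((t k : ℤ) - j) :=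
          mul_le_mul_of_nonneg_left e1 hpow0.le
      _ ≤ ∑ k ∈ Abig, aZ ((t k : ℤ) - (j - m)) := hstep4
      _ ≤ ∑ k ∈ A, aZ ((t k : ℤ) - (j - m)) := hstep2
      _ ≤ PP aZ t i₀ n (j - m) := hstep1
  linarith [hfinal]



include haZ hd0 hd1 hCd hi₀ hlo hhi hBa ha2 in
lemma tsum_lower_of_PP {t : ℕ → ℕ} (ht : StrictMono t) (n : ℕ) (j : ℤ)
    (hP : max (4*Cd/d) ((2:ℝ)^((5:ℝ)-d) * (B*(i₀:ℝ)+1)) ≤ PP aZ t i₀ n j) :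
    ((2:ℝ)^(d-5))^2 / (4*Cd/d)^(1/d) * (PP aZ t i₀ n j)^(2 + 1/d)
      ≤ ∑' j' : ℤ, (DD aZ t n j')^2 := by
  classical
  set P := PP aZ t i₀ n j with hPdef
  have hC3 : (0:ℝ) < 4*Cd/d := by positivity
  have hP1 : (0:ℝ) < P := lt_of_lt_of_le (lt_of_lt_of_le hC3 (le_max_left _ _)) hP
  set X : ℝ := (P/(4*Cd/d))^(1/d) with hX
  have hX0 : 0 ≤ X := Real.rpow_nonneg (by positivity) _
  set M := Nat.floor X with hM
  have hpow5 : (0:ℝ) < (2:ℝ)^(d-5) := Real.rpow_pos_of_pos (by norm_num) _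
  have hpow4 : (0:ℝ) < (2:ℝ)^(d-4) := Real.rpow_pos_of_pos (by norm_num) _
  have hpow3 : (0:ℝ) < (2:ℝ)^(d-3) := Real.rpow_pos_of_pos (by norm_num) _
  have h45 : (2:ℝ)^(d-4) = 2 * (2:ℝ)^(d-5) := by
    rw [show d - 4 = (d-5) + 1 by ring, Real.rpow_add_one (by norm_num : (2:ℝ) ≠ 0)]
    ring
  have h34 : (2:ℝ)^(d-3) = 2 * (2:ℝ)^(d-4) := by
    rw [show d - 3 = (d-4) + 1 by ring, Real.rpow_add_one (by norm_num : (2:ℝ) ≠ 0)]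
    ring
  have hBi : (2:ℝ)^(d-5) * P ≥ B*(i₀:ℝ)+1 := by
    have h1 : (2:ℝ)^(d-5) * ((2:ℝ)^((5:ℝ)-d) * (B*(i₀:ℝ)+1)) = B*(i₀:ℝ)+1 := by
      rw [← mul_assoc, ← Real.rpow_add (by norm_num : (0:ℝ) < 2)]
      norm_num
    calc B*(i₀:ℝ)+1 = (2:ℝ)^(d-5) * ((2:ℝ)^((5:ℝ)-d) * (B*(i₀:ℝ)+1)) := h1.symm
      _ ≤ (2:ℝ)^(d-5) * P :=
          mul_le_mul_of_nonneg_left (le_trans (le_max_right _ _) hP) hpow5.le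
  have key1 : ∀ m : ℕ, m ≤ M → (2:ℝ)^(d-5) * P ≤ DD aZ t n (j - m) := by
    intro m hm
    have hmX : (m:ℝ) ≤ X := le_trans (by exact_mod_cast hm) (Nat.floor_le hX0)
    have hmd : (m:ℝ)^d ≤ P/(4*Cd/d) := by
      have h1 : ((m:ℝ))^d ≤ X^d := Real.rpow_le_rpow (by positivity) hmX hd0.le
      have h2 : X^d = P/(4*Cd/d) := by
        rw [hX, one_div, Real.rpow_inv_rpow (by positivity) (ne_of_gt hd0)]
      linarith
    have hmd2 : (2*Cd/d) * (m:ℝ)^d ≤ P/2 := by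
      have h3 : (2*Cd/d) * (m:ℝ)^d ≤ (2*Cd/d) * (P/(4*Cd/d)) :=
        mul_le_mul_of_nonneg_left hmd (by positivity)
      have h4 : (2*Cd/d) * (P/(4*Cd/d)) = P/2 := by
        field_simp
        ring
      linarith
    have hshift := PP_shift haZ hd0 hd1 hCd hi₀ hlo hhi ht n j m
    have hPP4 : (2:ℝ)^(d-4) * P ≤ PP aZ t i₀ n (j - m) := by
      have h5 : (2:ℝ)^(d-3) * ((2*Cd/d) * (m:ℝ)^d) ≤ (2:ℝ)^(d-3) * (P/2) :=
        mul_le_mul_of_nonneg_left hmd2 hpow3.le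
      have h6 : (2:ℝ)^(d-3) * (P/2) = (2:ℝ)^(d-4) * P := by
        rw [h34]; ring
      nlinarith [hshift]
    have hhead := head_abs_le (i₀ := i₀) haZ hBa ht n (j - (m:ℤ))
    have h7 : PP aZ t i₀ n (j - m) - B*(i₀:ℝ) ≤ DD aZ t n (j - m) := by
      have := abs_le.1 hhead
      linarith [this.1]
    have h8 : (2:ℝ)^(d-5) * P ≤ (2:ℝ)^(d-4) * P - B*(i₀:ℝ) := by
      rw [h45]
      nlinarith [hBi]
    linarith
  have hsummable := summable_DD_sq haZ ha2 t n
  set G := (Finset.range (M+1)).image (fun m : ℕ => j - (m:ℤ)) with hG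
  have hGsum : ∑ j' ∈ G, (DD aZ t n j')^2 = ∑ m ∈ Finset.range (M+1), (DD aZ t n (j - m))^2 := by
    rw [hG, Finset.sum_image]
    intro x _ y _ hxy
    simp only at hxy
    omega
  have key2 : ∑ j' ∈ G, (DD aZ t n j')^2 ≤ ∑' j' : ℤ, (DD aZ t n j')^2 :=
    Summable.sum_le_tsum G (fun _ _ => sq_nonneg _) hsummable
  have key3 : ((M:ℝ)+1) * ((2:ℝ)^(d-5) * P)^2 ≤ ∑ m ∈ Finset.range (M+1), (DD aZ t n (j - m))^2 := by
    have h9 : ∀ m ∈ Finset.range (M+1), ((2:ℝ)^(d-5) * P)^2 ≤ (DD aZ t n (j - m))^2 := by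
      intro m hm
      rw [Finset.mem_range] at hm
      have := key1 m (by omega)
      have hnn : (0:ℝ) ≤ (2:ℝ)^(d-5) * P := by positivity
      exact pow_le_pow_left₀ hnn this 2
    have h10 := Finset.card_nsmul_le_sum (Finset.range (M+1))
      (fun m => (DD aZ t n (j - m))^2) (((2:ℝ)^(d-5) * P)^2) h9
    rw [Finset.card_range, nsmul_eq_mul] at h10
    calc ((M:ℝ)+1) * ((2:ℝ)^(d-5) * P)^2 = ((M+1 : ℕ):ℝ) * ((2:ℝ)^(d-5) * P)^2 := by
          push_cast; ring
      _ ≤ _ := h10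
  have key4 : X ≤ (M:ℝ)+1 := (Nat.lt_floor_add_one X).le
  have hfin : ((2:ℝ)^(d-5))^2 / (4*Cd/d)^(1/d) * P^(2 + 1/d) ≤ ((M:ℝ)+1) * ((2:ℝ)^(d-5) * P)^2 := by
    have e1 : P^(2 + 1/d) = P^(2:ℕ) * P^(1/d) := by
      rw [Real.rpow_add hP1]
      congr 1
      rw [← Real.rpow_natCast P 2]
      norm_num
    have e2 : X = P^(1/d) / (4*Cd/d)^(1/d) := Real.div_rpow hP1.le hC3.le _
    have e3 : ((2:ℝ)^(d-5))^2 / (4*Cd/d)^(1/d) * P^(2 + 1/d)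
        = X * (((2:ℝ)^(d-5) * P)^2) := by
      rw [e1, e2]
      field_simp
    rw [e3]
    exact mul_le_mul_of_nonneg_right key4 (by positivity)
  calc ((2:ℝ)^(d-5))^2 / (4*Cd/d)^(1/d) * P^(2 + 1/d)
      ≤ ((M:ℝ)+1) * ((2:ℝ)^(d-5) * P)^2 := hfin
    _ ≤ ∑ m ∈ Finset.range (M+1), (DD aZ t n (j - m))^2 := key3
    _ = ∑ j' ∈ G, (DD aZ t n j')^2 := hGsum.symm
    _ ≤ ∑' j' : ℤ, (DD aZ t n j')^2 := key2



include haZ hd0 hd1 hCd hi₀ hlo ha2 in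
lemma tsum_lower_n {t : ℕ → ℕ} (ht : StrictMono t) (n : ℕ) (hn : 1 ≤ n) :
    (Cd/2 * (i₀:ℝ)^(d-1))^2 * (2:ℝ)^(-(2*d)) * (n:ℝ)^(2*d/(2*d+1))
      ≤ ∑' j' : ℤ, (DD aZ t n j')^2 := by
  classical
  set θ : ℝ := 2*d/(2*d+1) with hθ
  have hθ0 : 0 < θ := by rw [hθ]; positivity
  have hi₀R : (1:ℝ) ≤ (i₀:ℝ) := by exact_mod_cast hi₀
  have hi₀R0 : (0:ℝ) < (i₀:ℝ) := lt_of_lt_of_le zero_lt_one hi₀R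
  set q : ℝ := Cd/2 * (i₀:ℝ)^(d-1) with hq
  have hq0 : 0 < q := by rw [hq]; positivity
  have h2d1 : (2:ℝ)^(-(2*d)) ≤ 1 :=
    Real.rpow_le_one_of_one_le_of_nonpos (by norm_num) (by linarith)
  have h2d0 : (0:ℝ) < (2:ℝ)^(-(2*d)) := Real.rpow_pos_of_pos (by norm_num) _
  have hsummable := summable_DD_sq haZ ha2 t n
  -- starts
  set S := (Finset.Icc 1 n).filter (fun k => k = 1 ∨ t (k-1) + i₀ < t k) with hS
  have h1S : 1 ∈ S := by
    rw [hS, Finset.mem_filter, Finset.mem_Icc]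
    exact ⟨⟨le_refl 1, hn⟩, Or.inl rfl⟩
  have hSne : S.Nonempty := ⟨1, h1S⟩
  have hsn : S.card ≤ n := le_trans (Finset.card_filter_le _ _) (by simp [Nat.card_Icc])
  have hs1 : 1 ≤ S.card := Finset.card_pos.2 hSne
  -- every start gives a positive witness
  have hterms : ∀ k ∈ S, ∀ l ∈ Finset.Icc 1 n, 0 ≤ aZ ((t l : ℤ) - ((t k : ℤ) - i₀)) := by
    intro k hk l hl
    rw [hS, Finset.mem_filter, Finset.mem_Icc] at hk
    rw [Finset.mem_Icc] at hl
    rcases lt_or_ge l k with hlk | hkl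
    · rcases hk.2 with h1 | h2
      · omega
      · have hml : t l ≤ t (k-1) := ht.monotone (by omega)
        rw [aZ_of_neg haZ (by omega)]
    · have hml : t k ≤ t l := ht.monotone hkl
      exact aZ_nonneg haZ hd0 hCd hi₀ hlo (by omega)
  have hstartD : ∀ k ∈ S, q ≤ DD aZ t n ((t k : ℤ) - i₀) := by
    intro k hk
    have hkIcc : k ∈ Finset.Icc 1 n := Finset.mem_of_mem_filter k hk
    have hval : q ≤ aZ ((t k : ℤ) - ((t k : ℤ) - i₀)) := by
      have heq : (t k : ℤ) - ((t k : ℤ) - i₀) = (i₀ : ℤ) := by ring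
      rw [heq, aZ_of_nonneg haZ (by positivity)]
      have := hlo i₀ (le_refl i₀)
      simpa [hq] using this
    have hsum := Finset.single_le_sum
      (f := fun l => aZ ((t l : ℤ) - ((t k : ℤ) - i₀)))
      (fun l hl => hterms k hk l hl) hkIcc
    rw [DD]
    exact le_trans hval hsum
  have hDpos : ∀ k ∈ S, (0:ℝ) ≤ DD aZ t n ((t k : ℤ) - i₀) :=
    fun k hk => le_trans hq0.le (hstartD k hk)
  -- case A bound : tsum ≥ q^2 * s
  have hcaseA : q^2 * (S.card : ℝ) ≤ ∑' j' : ℤ, (DD aZ t n j')^2 := by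
    set GS := S.image (fun k => (t k : ℤ) - i₀) with hGS
    have hinj : ∀ x ∈ S, ∀ y ∈ S, (t x : ℤ) - i₀ = (t y : ℤ) - i₀ → x = y := by
      intro x _ y _ hxy
      exact ht.injective (by omega)
    have himg : ∑ j' ∈ GS, (DD aZ t n j')^2 = ∑ k ∈ S, (DD aZ t n ((t k : ℤ) - i₀))^2 := by
      rw [hGS, Finset.sum_image hinj]
    have hsumle : ∑ j' ∈ GS, (DD aZ t n j')^2 ≤ ∑' j' : ℤ, (DD aZ t n j')^2 :=
      Summable.sum_le_tsum GS (fun _ _ => sq_nonneg _) hsummable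
    have hlow : ∀ k ∈ S, q^2 ≤ (DD aZ t n ((t k : ℤ) - i₀))^2 := by
      intro k hk
      exact pow_le_pow_left₀ hq0.le (hstartD k hk) 2
    have hcard := Finset.card_nsmul_le_sum S
      (fun k => (DD aZ t n ((t k : ℤ) - i₀))^2) (q^2) hlow
    rw [nsmul_eq_mul] at hcard
    calc q^2 * (S.card : ℝ) = (S.card : ℝ) * q^2 := by ring
      _ ≤ ∑ k ∈ S, (DD aZ t n ((t k : ℤ) - i₀))^2 := hcard
      _ = ∑ j' ∈ GS, (DD aZ t n j')^2 := himg.symm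
      _ ≤ _ := hsumle
  -- pigeonhole: a long run
  set m₀ := n / S.card with hm₀
  have hm₀1 : 1 ≤ m₀ := (Nat.one_le_div_iff (by omega)).2 hsn
  set c : ℕ → ℕ := fun k => (S.filter (fun x => x ≤ k)).sup id with hc
  have hcmem : ∀ k, 1 ≤ k → c k ∈ S ∧ c k ≤ k := by
    intro k hk
    have hne : (S.filter (fun x => x ≤ k)).Nonempty :=
      ⟨1, Finset.mem_filter.2 ⟨h1S, hk⟩⟩
    obtain ⟨b, hb, hbsup⟩ := Finset.exists_mem_eq_sup _ hne id
    rw [Finset.mem_filter] at hb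
    constructor
    · rw [hc]; simp only; rw [hbsup]; exact hb.1
    · rw [hc]; simp only; rw [hbsup]; exact hb.2
  have hcle : ∀ k, ∀ x ∈ S, x ≤ k → x ≤ c k := by
    intro k x hx hxk
    exact Finset.le_sup (f := id) (Finset.mem_filter.2 ⟨hx, hxk⟩)
  have hmaps : ∀ k ∈ Finset.Icc 1 n, c k ∈ S := by
    intro k hk
    rw [Finset.mem_Icc] at hk
    exact (hcmem k hk.1).1
  have hmul : S.card * m₀ ≤ (Finset.Icc 1 n).card := by
    rw [Nat.card_Icc]
    simp only [Nat.add_sub_cancel]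
    rw [hm₀, mul_comm]
    exact Nat.div_mul_le_self n S.card
  obtain ⟨kst, hkstS, hfib⟩ :=
    Finset.exists_le_card_fiber_of_mul_le_card_of_maps_to hmaps hSne hmul
  set F := (Finset.Icc 1 n).filter (fun k => c k = kst) with hF
  have hFne : F.Nonempty := Finset.card_pos.1 (by omega)
  set kmax := F.max' hFne with hkmax
  have hkmaxF : kmax ∈ F := Finset.max'_mem F hFne
  have hkmaxIcc : kmax ∈ Finset.Icc 1 n := Finset.mem_of_mem_filter kmax hkmaxF
  have hkmax1 : 1 ≤ kmax ∧ kmax ≤ n := by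
    rw [Finset.mem_Icc] at hkmaxIcc; exact hkmaxIcc
  have hckmax : c kmax = kst := (Finset.mem_filter.1 hkmaxF).2
  have hkstle : kst ≤ kmax := by
    have := (hcmem kmax hkmax1.1).2
    omega
  have hkst1 : 1 ≤ kst := by
    have := Finset.mem_of_mem_filter kst hkstS
    rw [Finset.mem_Icc] at this
    exact this.1
  have hFsub : F ⊆ Finset.Icc kst kmax := by
    intro k hk
    rw [hF, Finset.mem_filter, Finset.mem_Icc] at hk
    rw [Finset.mem_Icc]
    have hk1 : 1 ≤ k := hk.1.1
    have := (hcmem k hk1).2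
    constructor
    · omega
    · exact Finset.le_max' F k (by rw [hF, Finset.mem_filter, Finset.mem_Icc]; exact hk)
  have hcardF : m₀ ≤ kmax - kst + 1 := by
    calc m₀ ≤ F.card := hfib
      _ ≤ (Finset.Icc kst kmax).card := Finset.card_le_card hFsub
      _ = kmax - kst + 1 := by rw [Nat.card_Icc]; omega
  have hnostart : ∀ k, kst < k → k ≤ kmax → t k ≤ t (k-1) + i₀ := by
    intro k hk1 hk2
    by_contra hcon
    push_neg at hcon
    have hkS : k ∈ S := by
      rw [hS, Finset.mem_filter, Finset.mem_Icc]
      exact ⟨⟨by omega, by omega⟩, Or.inr hcon⟩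
    have := hcle kmax k hkS hk2
    omega
  have hgap : ∀ u : ℕ, kst + u ≤ kmax → t (kst + u) ≤ t kst + u * i₀ := by
    intro u
    induction u with
    | zero => intro _; simp
    | succ u ih =>
      intro hu
      have h1 := ih (by omega)
      have h2 := hnostart (kst + u + 1) (by omega) (by omega)
      have h3 : kst + u + 1 - 1 = kst + u := by omega
      rw [h3] at h2
      have : kst + (u+1) = kst + u + 1 := by omega
      rw [this]
      calc t (kst + u + 1) ≤ t (kst + u) + i₀ := h2
        _ ≤ t kst + u * i₀ + i₀ := by omega
        _ = t kst + (u+1) * i₀ := by ring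
  -- the witness j*
  set jst : ℤ := (t kst : ℤ) - i₀ with hjst
  have hm₀R : (1:ℝ) ≤ (m₀:ℝ) := by exact_mod_cast hm₀1
  have hm₀R0 : (0:ℝ) < (m₀:ℝ) := lt_of_lt_of_le zero_lt_one hm₀R
  have hDstar : q * (m₀:ℝ)^d ≤ DD aZ t n jst := by
    set G2 := (Finset.range m₀).image (fun u => kst + u) with hG2
    have hG2sub : G2 ⊆ Finset.Icc 1 n := by
      intro k hk
      rw [hG2, Finset.mem_image] at hk
      obtain ⟨u, hu, hku⟩ := hk
      rw [Finset.mem_range] at hu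
      rw [Finset.mem_Icc, ← hku]
      omega
    have hle1 : ∑ k ∈ G2, aZ ((t k : ℤ) - jst) ≤ DD aZ t n jst := by
      rw [DD]
      exact Finset.sum_le_sum_of_subset_of_nonneg hG2sub
        (fun l hl _ => hterms kst hkstS l hl)
    have himg2 : ∑ k ∈ G2, aZ ((t k : ℤ) - jst)
        = ∑ u ∈ Finset.range m₀, aZ ((t (kst + u) : ℤ) - jst) := by
      rw [hG2, Finset.sum_image]
      intro x _ y _ h
      simp only at h
      omega
    have hlow2 : ∀ u ∈ Finset.range m₀,
        Cd/2 * ((m₀:ℝ) * (i₀:ℝ))^(d-1) ≤ aZ ((t (kst + u) : ℤ) - jst) := by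
      intro u hu
      rw [Finset.mem_range] at hu
      have hmono : t kst ≤ t (kst + u) := ht.monotone (by omega)
      have hvlo : (i₀:ℤ) ≤ (t (kst + u) : ℤ) - jst := by rw [hjst]; omega
      have hgapu := hgap u (by omega)
      have hgapu' : ((t (kst + u)) : ℤ) ≤ (t kst : ℤ) + (u:ℤ) * (i₀:ℤ) := by
        exact_mod_cast hgapu
      have hvhi : ((t (kst + u) : ℤ) - jst : ℤ) ≤ ((u:ℤ)+1) * (i₀:ℤ) := by
        rw [hjst]
        have hr : ((u:ℤ)+1) * (i₀:ℤ) = (u:ℤ) * (i₀:ℤ) + (i₀:ℤ) := by ring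
        rw [hr]
        linarith
      have h1 : Cd/2 * (((t (kst + u) : ℤ) - jst : ℤ) : ℝ)^(d-1)
          ≤ aZ ((t (kst + u) : ℤ) - jst) := aZ_lo haZ hlo hvlo
      have hvpos : (0:ℝ) < (((t (kst + u) : ℤ) - jst : ℤ) : ℝ) := by
        have : (1:ℤ) ≤ (t (kst + u) : ℤ) - jst := le_trans (by exact_mod_cast hi₀) hvlo
        exact_mod_cast lt_of_lt_of_le zero_lt_one (by exact_mod_cast this)
      have h2 : ((m₀:ℝ) * (i₀:ℝ))^(d-1) ≤ (((t (kst + u) : ℤ) - jst : ℤ) : ℝ)^(d-1) := by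
        refine Real.rpow_le_rpow_of_nonpos hvpos ?_ (by linarith)
        have hv2 : (((t (kst + u) : ℤ) - jst : ℤ) : ℝ) ≤ ((u:ℝ)+1) * (i₀:ℝ) := by
          exact_mod_cast hvhi
        have hu1 : ((u:ℝ)+1) ≤ (m₀:ℝ) := by
          have : u + 1 ≤ m₀ := hu
          exact_mod_cast this
        calc (((t (kst + u) : ℤ) - jst : ℤ) : ℝ) ≤ ((u:ℝ)+1) * (i₀:ℝ) := hv2
          _ ≤ (m₀:ℝ) * (i₀:ℝ) := mul_le_mul_of_nonneg_right hu1 hi₀R0.le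
      calc Cd/2 * ((m₀:ℝ) * (i₀:ℝ))^(d-1)
          ≤ Cd/2 * (((t (kst + u) : ℤ) - jst : ℤ) : ℝ)^(d-1) :=
            mul_le_mul_of_nonneg_left h2 (by positivity)
        _ ≤ _ := h1
    have hcard2 := Finset.card_nsmul_le_sum (Finset.range m₀)
      (fun u => aZ ((t (kst + u) : ℤ) - jst)) (Cd/2 * ((m₀:ℝ) * (i₀:ℝ))^(d-1)) hlow2
    rw [Finset.card_range, nsmul_eq_mul] at hcard2
    have heqq : (m₀:ℝ) * (Cd/2 * ((m₀:ℝ) * (i₀:ℝ))^(d-1)) = q * (m₀:ℝ)^d := by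
      rw [Real.mul_rpow hm₀R0.le hi₀R0.le, hq]
      have : (m₀:ℝ)^d = (m₀:ℝ)^(d-1) * (m₀:ℝ) := by
        rw [← Real.rpow_add_one (ne_of_gt hm₀R0)]; ring_nf
      rw [this]; ring
    calc q * (m₀:ℝ)^d = (m₀:ℝ) * (Cd/2 * ((m₀:ℝ) * (i₀:ℝ))^(d-1)) := heqq.symm
      _ ≤ ∑ u ∈ Finset.range m₀, aZ ((t (kst + u) : ℤ) - jst) := hcard2
      _ = ∑ k ∈ G2, aZ ((t k : ℤ) - jst) := himg2.symm
      _ ≤ DD aZ t n jst := hle1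
  have hcaseB : (q * (m₀:ℝ)^d)^2 ≤ ∑' j' : ℤ, (DD aZ t n j')^2 := by
    have h1 : (q * (m₀:ℝ)^d)^2 ≤ (DD aZ t n jst)^2 :=
      pow_le_pow_left₀ (by positivity) hDstar 2
    exact le_trans h1 (Summable.le_tsum hsummable jst (fun b _ => sq_nonneg _))
  -- combine
  rcases le_or_gt ((n:ℝ)^θ) (S.card : ℝ) with hcase | hcase
  · have h0 : (0:ℝ) ≤ (n:ℝ)^θ := Real.rpow_nonneg (by positivity) _
    have hstep : q^2 * (2:ℝ)^(-(2*d)) * (n:ℝ)^θ ≤ q^2 * (n:ℝ)^θ := by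
      have h1 := mul_le_mul_of_nonneg_right
        (mul_le_mul_of_nonneg_left h2d1 (sq_nonneg q)) h0
      simpa [mul_one] using h1
    calc q^2 * (2:ℝ)^(-(2*d)) * (n:ℝ)^θ ≤ q^2 * (n:ℝ)^θ := hstep
      _ ≤ q^2 * (S.card : ℝ) := mul_le_mul_of_nonneg_left hcase (by positivity)
      _ ≤ _ := hcaseA
  · -- s < n^θ ; then m₀ ≥ n^(1-θ)/2
    have hnR : (0:ℝ) < (n:ℝ) := by exact_mod_cast hn
    have hsR : (0:ℝ) < (S.card:ℝ) := by exact_mod_cast hs1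
    have hdm : (n:ℝ) < (S.card:ℝ) * ((m₀:ℝ)+1) := by
      have h1 := Nat.div_add_mod n S.card
      have h2 : n % S.card < S.card := Nat.mod_lt n (by omega)
      have h3 : n = S.card * m₀ + n % S.card := by
        rw [hm₀]; exact (Nat.div_add_mod n S.card).symm
      have h4 : (n:ℝ) = (S.card:ℝ) * (m₀:ℝ) + ((n % S.card : ℕ):ℝ) := by
        exact_mod_cast h3
      have h5 : ((n % S.card : ℕ):ℝ) < (S.card:ℝ) := by exact_mod_cast h2
      nlinarith
    have hm2 : (n:ℝ) < (n:ℝ)^θ * (2 * (m₀:ℝ)) := by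
      have h6 : (S.card:ℝ) * ((m₀:ℝ)+1) ≤ (S.card:ℝ) * (2*(m₀:ℝ)) := by
        refine mul_le_mul_of_nonneg_left (by linarith) hsR.le
      have h7 : (S.card:ℝ) * (2*(m₀:ℝ)) < (n:ℝ)^θ * (2*(m₀:ℝ)) := by
        refine mul_lt_mul_of_pos_right hcase (by linarith)
      linarith
    have hnθ0 : (0:ℝ) < (n:ℝ)^θ := Real.rpow_pos_of_pos hnR _
    have hlowm : (n:ℝ)^(1-θ) / 2 ≤ (m₀:ℝ) := by
      have h8 : (n:ℝ)^(1-θ) = (n:ℝ) / (n:ℝ)^θ := by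
        rw [Real.rpow_sub hnR, Real.rpow_one]
      have h9 : (n:ℝ) / (n:ℝ)^θ ≤ 2*(m₀:ℝ) := by
        rw [div_le_iff₀ hnθ0]; nlinarith [hm2]
      rw [h8]
      linarith
    have hm2d : ((n:ℝ)^(1-θ)/2)^(2*d) ≤ (m₀:ℝ)^(2*d) :=
      Real.rpow_le_rpow (by positivity) hlowm (by linarith)
    have hexp : (1-θ) * (2*d) = θ := by
      rw [hθ]
      have h2d1' : (2*d+1) ≠ 0 := by positivity
      field_simp
      ring
    have hLHS : ((n:ℝ)^(1-θ)/2)^(2*d) = (2:ℝ)^(-(2*d)) * (n:ℝ)^θ := by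
      rw [Real.div_rpow (by positivity) (by norm_num)]
      rw [← Real.rpow_mul hnR.le, hexp]
      rw [Real.rpow_neg (by norm_num : (0:ℝ) ≤ 2)]
      rw [div_eq_mul_inv, mul_comm]
    have hm2d' : (2:ℝ)^(-(2*d)) * (n:ℝ)^θ ≤ (m₀:ℝ)^(2*d) := by
      rw [← hLHS]; exact hm2d
    have hsq : (q * (m₀:ℝ)^d)^2 = q^2 * (m₀:ℝ)^(2*d) := by
      have h1 : ((m₀:ℝ)^d)^2 = (m₀:ℝ)^(2*d) := by
        rw [← Real.rpow_natCast ((m₀:ℝ)^d) 2, ← Real.rpow_mul hm₀R0.le]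
        norm_num
        ring_nf
      rw [mul_pow, h1]
    calc q^2 * (2:ℝ)^(-(2*d)) * (n:ℝ)^θ = q^2 * ((2:ℝ)^(-(2*d)) * (n:ℝ)^θ) := by ring
      _ ≤ q^2 * (m₀:ℝ)^(2*d) := mul_le_mul_of_nonneg_left hm2d' (by positivity)
      _ = (q * (m₀:ℝ)^d)^2 := hsq.symm
      _ ≤ _ := hcaseB


include haZ hd0 hd1 hCd hi₀ hlo hhi hBa ha2 in
lemma det_main (η : ℝ) (hη : 0 < η) :
    ∃ N : ℕ, ∀ n, N ≤ n → ∀ t : ℕ → ℕ, StrictMono t →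
      (0 < ∑' j' : ℤ, (DD aZ t n j')^2) ∧
      ∀ j : ℤ, (DD aZ t n j)^2 ≤ η * ∑' j' : ℤ, (DD aZ t n j')^2 := by
  classical
  have hB0 : 0 ≤ B := B_nonneg hBa
  have hi₀R : (1:ℝ) ≤ (i₀:ℝ) := by exact_mod_cast hi₀
  set θ : ℝ := 2*d/(2*d+1) with hθ
  have hθ0 : 0 < θ := by rw [hθ]; positivity
  have hθ1 : θ < 1 := by
    rw [hθ, div_lt_one (by positivity)]
    linarith
  set cL : ℝ := (Cd/2 * (i₀:ℝ)^(d-1))^2 * (2:ℝ)^(-(2*d)) with hcL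
  have hcL0 : 0 < cL := by
    rw [hcL]
    have h1 : (0:ℝ) < Cd/2 * (i₀:ℝ)^(d-1) := by positivity
    have h2 : (0:ℝ) < (2:ℝ)^(-(2*d)) := Real.rpow_pos_of_pos (by norm_num) _
    positivity
  set c₅ : ℝ := ((2:ℝ)^(d-5))^2 / (4*Cd/d)^(1/d) with hc₅
  have hc₅0 : 0 < c₅ := by
    rw [hc₅]
    have h1 : (0:ℝ) < (2:ℝ)^(d-5) := Real.rpow_pos_of_pos (by norm_num) _
    have h2 : (0:ℝ) < (4*Cd/d)^(1/d) := Real.rpow_pos_of_pos (by positivity) _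
    positivity
  have hc₅θ : 0 < c₅^θ := Real.rpow_pos_of_pos hc₅0 _
  set P₀ : ℝ := max (4*Cd/d) ((2:ℝ)^((5:ℝ)-d) * (B*(i₀:ℝ)+1)) with hP₀
  have hP₀0 : 0 < P₀ := lt_of_lt_of_le (by positivity) (le_max_left _ _)
  set K₁ : ℝ := 2*(B*(i₀:ℝ))^2 + 2*P₀^2 with hK₁
  have hK₁0 : 0 < K₁ := by rw [hK₁]; positivity
  set R₂ : ℝ := (4/(η * c₅^θ))^(1/(1-θ)) with hR₂
  have hR₂0 : 0 < R₂ := Real.rpow_pos_of_pos (by positivity) _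
  set R : ℝ := max (2*K₁/η) R₂ with hR
  have hR0 : 0 < R := lt_of_lt_of_le hR₂0 (le_max_right _ _)
  set x : ℝ := (max (R/cL) 1)^(1/θ) with hx
  have hx0 : 0 < x := Real.rpow_pos_of_pos (lt_of_lt_of_le zero_lt_one (le_max_right _ _)) _
  refine ⟨Nat.ceil x + 1, fun n hn t ht => ?_⟩
  have hn1 : 1 ≤ n := by
    have := Nat.le_ceil x
    omega
  have hnx : x ≤ (n:ℝ) := by
    have h1 : (Nat.ceil x : ℝ) ≥ x := Nat.le_ceil x
    have h2 : ((Nat.ceil x + 1 : ℕ):ℝ) ≤ (n:ℝ) := by exact_mod_cast hn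
    push_cast at h2
    linarith
  have hnθ : R/cL ≤ (n:ℝ)^θ := by
    have h1 : x^θ ≤ (n:ℝ)^θ := Real.rpow_le_rpow hx0.le hnx hθ0.le
    have h2 : x^θ = max (R/cL) 1 := by
      rw [hx, one_div, Real.rpow_inv_rpow (le_trans zero_le_one (le_max_right _ _)) (ne_of_gt hθ0)]
    rw [h2] at h1
    exact le_trans (le_max_left _ _) h1
  have hLR : R ≤ cL * (n:ℝ)^θ := by
    calc R = cL * (R/cL) := by field_simp
      _ ≤ cL * (n:ℝ)^θ := mul_le_mul_of_nonneg_left hnθ hcL0.le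
  have hτL := tsum_lower_n haZ hd0 hd1 hCd hi₀ hlo ha2 ht n hn1
  set τ : ℝ := ∑' j' : ℤ, (DD aZ t n j')^2 with hτ
  have hτR : R ≤ τ := le_trans hLR hτL
  have hτ0 : 0 < τ := lt_of_lt_of_le hR0 hτR
  refine ⟨hτ0, fun j => ?_⟩
  -- pointwise bound on D_j^2
  have hhead := head_abs_le (i₀ := i₀) haZ hBa ht n j
  have hPnn := PP_nonneg haZ hd0 hCd hi₀ hlo t n j
  set P : ℝ := PP aZ t i₀ n j with hPd
  have hDb : (DD aZ t n j)^2 ≤ 2*(B*(i₀:ℝ))^2 + 2*P^2 := by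
    have h1 : |DD aZ t n j| ≤ B*(i₀:ℝ) + P := by
      have h2 := abs_le.1 hhead
      rw [abs_le]
      constructor <;> nlinarith [h2.1, h2.2]
    have h3 : (DD aZ t n j)^2 ≤ (B*(i₀:ℝ) + P)^2 := by
      have h4 := sq_abs (DD aZ t n j)
      nlinarith [abs_nonneg (DD aZ t n j)]
    nlinarith [h3, sq_nonneg (B*(i₀:ℝ) - P)]
  have hPsq : P^2 ≤ P₀^2 + (τ/c₅)^θ := by
    rcases le_or_gt P P₀ with hPc | hPc
    · have h1 : P^2 ≤ P₀^2 := pow_le_pow_left₀ hPnn hPc 2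
      have h2 : (0:ℝ) ≤ (τ/c₅)^θ := Real.rpow_nonneg (by positivity) _
      linarith
    · have hbig := tsum_lower_of_PP haZ hd0 hd1 hCd hi₀ hlo hhi hBa ha2 ht n j
        (le_of_lt hPc)
      have hP1 : 0 < P := lt_of_le_of_lt hP₀0.le hPc
      have h1 : P^(2+1/d) ≤ τ/c₅ := by
        rw [le_div_iff₀ hc₅0]
        calc P^(2+1/d) * c₅ = c₅ * P^(2+1/d) := by ring
          _ ≤ τ := hbig
      have h2 : (P^(2+1/d))^θ ≤ (τ/c₅)^θ :=
        Real.rpow_le_rpow (Real.rpow_nonneg hP1.le _) h1 hθ0.le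
      have h3 : (P^(2+1/d))^θ = P^2 := by
        rw [← Real.rpow_natCast P 2, ← Real.rpow_mul hP1.le]
        congr 1
        rw [hθ]
        field_simp
        ring
      rw [h3] at h2
      linarith [h2, sq_nonneg P₀]
  have hDK : (DD aZ t n j)^2 ≤ K₁ + 2*(τ/c₅)^θ := by
    rw [hK₁]
    nlinarith [hDb, hPsq]
  -- now K₁ + 2 (τ/c₅)^θ ≤ η τ
  have hpart1 : K₁ ≤ (η/2) * τ := by
    have h1 : 2*K₁/η ≤ τ := le_trans (le_trans (le_max_left _ _) (le_refl R)) hτR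
    rw [div_le_iff₀ hη] at h1
    linarith
  have hpart2 : 2*(τ/c₅)^θ ≤ (η/2) * τ := by
    have hτR2 : R₂ ≤ τ := le_trans (le_max_right _ _) hτR
    have h1 : R₂^(1-θ) ≤ τ^(1-θ) :=
      Real.rpow_le_rpow hR₂0.le hτR2 (by linarith)
    have h2 : R₂^(1-θ) = 4/(η * c₅^θ) := by
      rw [hR₂, one_div, Real.rpow_inv_rpow (by positivity) (by intro h; linarith [h])]
    have h3 : τ^(1-θ) * τ^θ = τ := by
      rw [← Real.rpow_add hτ0, ← Real.rpow_one τ]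
      norm_num
    have hτθ0 : (0:ℝ) ≤ τ^θ := Real.rpow_nonneg hτ0.le _
    have h4 : (4/(η * c₅^θ)) * τ^θ ≤ τ^(1-θ) * τ^θ := by
      refine mul_le_mul_of_nonneg_right ?_ hτθ0
      rw [← h2]; exact h1
    rw [h3] at h4
    have h5 : (τ/c₅)^θ = τ^θ/c₅^θ := Real.div_rpow hτ0.le hc₅0.le _
    rw [h5]
    have h6 : (η/2) * ((4/(η * c₅^θ)) * τ^θ) = 2 * (τ^θ/c₅^θ) := by
      field_simp
      ring
    calc 2 * (τ^θ/c₅^θ) = (η/2) * ((4/(η * c₅^θ)) * τ^θ) := h6.symm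
      _ ≤ (η/2) * τ := mul_le_mul_of_nonneg_left h4 (by positivity)
  calc (DD aZ t n j)^2 ≤ K₁ + 2*(τ/c₅)^θ := hDK
    _ ≤ (η/2)*τ + (η/2)*τ := add_le_add hpart1 hpart2
    _ = η * τ := by ring


end Main

end Stmt12Work

/-- With `d_{n,j} = ∑_{k=1}^n a_{T_k - j}` (`a_u = 0` for `u < 0`) and
`d_n² = ∑_{j∈ℤ} d_{n,j}²`, one has `sup_{j∈ℤ} (d_{n,j}²/d_n²) → 0` in probability as
`n → ∞`, where `a_i ∼ C_d i^{d-1}` (`0 < d < 1/2`, `∑ a_i² < ∞`) and `T_k = Δ_1 + ⋯ + Δ_k`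
is a renewal process built from i.i.d. positive integer-valued random variables. -/
theorem stmt12 {Ω : Type*} [MeasureSpace Ω] [IsProbabilityMeasure (ℙ : Measure Ω)]
    (a : ℕ → ℝ) (ha2 : Summable fun i => (a i) ^ 2)
    (d : ℝ) (hd0 : 0 < d) (hd1 : d < 1/2) (Cd : ℝ) (hCd : 0 < Cd)
    (ha : (fun i : ℕ => a i) ~[atTop] fun i : ℕ => Cd * (i : ℝ) ^ (d - 1))
    (Δ : ℕ → Ω → ℕ) (hΔmeas : ∀ i, Measurable (Δ i))
    (hΔindep : iIndepFun Δ ℙ)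
    (hΔident : ∀ i, IdentDistrib (Δ i) (Δ 0) ℙ ℙ)
    (hΔpos : ∀ i ω, 0 < Δ i ω)
    (T : ℕ → Ω → ℕ) (hT : ∀ k ω, T k ω = ∑ i ∈ Finset.range k, Δ i ω)
    (aZ : ℤ → ℝ) (haZ : ∀ u : ℤ, aZ u = if 0 ≤ u then a u.toNat else 0)
    (D : ℕ → ℤ → Ω → ℝ)
    (hD : ∀ n j ω, D n j ω = ∑ k ∈ Finset.Icc 1 n, aZ ((T k ω : ℤ) - j)) :
    ∀ η : ℝ, 0 < η →
      Tendsto (fun n : ℕ =>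
          ℙ {ω | η < ⨆ j : ℤ, (D n j ω) ^ 2 / ∑' j' : ℤ, (D n j' ω) ^ 2})
        atTop (𝓝 0) := by
  classical
  intro η hη
  -- extract the asymptotic two-sided bound
  have hlittle := ha.isLittleO
  have hev := hlittle.def (by norm_num : (0:ℝ) < 1/2)
  rw [Filter.eventually_atTop] at hev
  obtain ⟨i₀', hi₀'⟩ := hev
  set i₀ : ℕ := max i₀' 1 with hi₀def
  have hi₀1 : 1 ≤ i₀ := le_max_right _ _
  have hbounds : ∀ i : ℕ, i₀ ≤ i →
      (Cd / 2 * (i:ℝ) ^ (d-1) ≤ a i ∧ a i ≤ 2 * Cd * (i:ℝ) ^ (d-1)) := by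
    intro i hi
    have h1 := hi₀' i (le_trans (le_max_left _ _) hi)
    have hiR : (1:ℝ) ≤ (i:ℝ) := by
      have : 1 ≤ i := le_trans (le_max_right _ _) hi
      exact_mod_cast this
    have hg0 : (0:ℝ) ≤ Cd * (i:ℝ) ^ (d-1) := by positivity
    simp only [Pi.sub_apply, Real.norm_eq_abs] at h1
    rw [abs_of_nonneg hg0] at h1
    have h2 := abs_le.1 h1
    constructor
    · nlinarith [h2.1]
    · nlinarith [h2.2]
  have hlo : ∀ i : ℕ, i₀ ≤ i → Cd / 2 * (i:ℝ) ^ (d-1) ≤ a i := fun i hi => (hbounds i hi).1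
  have hhi : ∀ i : ℕ, i₀ ≤ i → a i ≤ 2 * Cd * (i:ℝ) ^ (d-1) := fun i hi => (hbounds i hi).2
  -- a uniform bound on |a|
  have htend := ha2.tendsto_atTop_zero
  have hev2 : ∀ᶠ i in atTop, (a i)^2 ≤ 1 := by
    have := htend.eventually_le_const (by norm_num : (0:ℝ) < 1)
    filter_upwards [this] with i hi using hi
  rw [Filter.eventually_atTop] at hev2
  obtain ⟨i₁, hi₁⟩ := hev2
  set B : ℝ := 1 + ∑ i ∈ Finset.range i₁, |a i| with hBdef
  have hBa : ∀ i : ℕ, |a i| ≤ B := by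
    intro i
    have hsumnn : (0:ℝ) ≤ ∑ i ∈ Finset.range i₁, |a i| :=
      Finset.sum_nonneg fun _ _ => abs_nonneg _
    rcases lt_or_ge i i₁ with hc | hc
    · have h1 : |a i| ≤ ∑ i ∈ Finset.range i₁, |a i| :=
        Finset.single_le_sum (f := fun i => |a i|) (fun _ _ => abs_nonneg _)
          (Finset.mem_range.2 hc)
      rw [hBdef]; linarith
    · have h1 := hi₁ i hc
      have h2 : |a i| ≤ 1 := by nlinarith [abs_nonneg (a i), sq_abs (a i)]
      rw [hBdef]; linarith
  -- the deterministic main lemma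
  obtain ⟨N, hN⟩ := Stmt12Work.det_main haZ hd0 hd1 hCd hi₀1 hlo hhi hBa ha2
    (η/2) (by positivity)
  -- strict monotonicity of the sampling sequence
  have hTmono : ∀ ω, StrictMono (fun k => T k ω) := by
    intro ω
    apply strictMono_nat_of_lt_succ
    intro k
    have h1 : T (k+1) ω = T k ω + Δ k ω := by
      rw [hT, hT, Finset.sum_range_succ]
    have := hΔpos k ω
    omega
  -- for n ≥ N the event is empty
  have hempty : ∀ n, N ≤ n →
      {ω : Ω | η < ⨆ j : ℤ, (D n j ω) ^ 2 / ∑' j' : ℤ, (D n j' ω) ^ 2} = (∅ : Set Ω) := by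
    intro n hn
    rw [Set.eq_empty_iff_forall_notMem]
    intro ω hω
    rw [Set.mem_setOf_eq] at hω
    have hDT : ∀ j : ℤ, D n j ω = Stmt12Work.DD aZ (fun k => T k ω) n j := by
      intro j
      rw [hD, Stmt12Work.DD]
    have hτeq : ∑' j' : ℤ, (D n j' ω)^2
        = ∑' j' : ℤ, (Stmt12Work.DD aZ (fun k => T k ω) n j')^2 := by
      congr 1
      funext j'
      rw [hDT j']
    obtain ⟨hτ0, hb⟩ := hN n hn (fun k => T k ω) (hTmono ω)
    have hsup : (⨆ j : ℤ, (D n j ω) ^ 2 / ∑' j' : ℤ, (D n j' ω) ^ 2) ≤ η/2 := by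
      refine ciSup_le fun j => ?_
      rw [hDT j, hτeq, div_le_iff₀ hτ0]
      exact hb j
    linarith [hω, hsup]
  -- conclude
  have heq : (fun n : ℕ =>
      ℙ {ω : Ω | η < ⨆ j : ℤ, (D n j ω) ^ 2 / ∑' j' : ℤ, (D n j' ω) ^ 2})
      =ᶠ[atTop] (fun _ => (0 : ℝ≥0∞)) := by
    rw [Filter.eventuallyEq_iff_exists_mem]
    refine ⟨{n | N ≤ n}, Filter.mem_atTop N, fun n hn => ?_⟩
    simp only
    rw [hempty n hn, measure_empty]
  exact Filter.Tendsto.congr' heq.symm tendsto_const_nhds
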